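/- Assume additionally that A is unitary. For 0 ≤ k ≤ N−1 let q_k^* denote the reversed polynomial of q_k: if q_k(z) = Σ_{j=0}^{k} a_j z^j then q_k^*(z) = Σ_{j=0}^{k} conj(a_{k−j}) z^j. Then σ_k(0)·q_k^*(z) = Σ_{j=0}^{k} conj(q_j(0))·q_j(z) for all z ∈ ℂ, and consequently the normalized GMRES residual at δ = 0 satisfies w_k(0) = q_k^*(A)·v_1. -/

import Mathlib

open Polynomial Matrix Finset

/-- The standard inner product `x^* y` on `ℂ^n` (conjugate-linear in the first slot). -/
noncomputable def inn {n : ℕ} (x y : Fin n → ℂ) : ℂ := ∑ i, (starRingEnd ℂ) (x i) * y i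

/-- The Euclidean norm on `ℂ^n`. -/
noncomputable def nrm {n : ℕ} (x : Fin n → ℂ) : ℝ := Real.sqrt (inn x x).re

/-- `σ_k(δ) = sqrt(Σ_{j=0}^k |q_j(δ)|²)`. -/
noncomputable def sigmaP (q : ℕ → Polynomial ℂ) (δ : ℂ) (k : ℕ) : ℝ :=
  Real.sqrt (∑ j ∈ Finset.range (k + 1), ‖(q j).eval δ‖ ^ 2)

/-- The reversed polynomial of `P` with respect to formal degree `k`:
`Σ_{j=0}^k conj(coeff_{k-j} P) X^j`. -/
noncomputable def revPoly (P : Polynomial ℂ) (k : ℕ) : Polynomial ℂ :=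
  ∑ j ∈ Finset.range (k + 1),
    Polynomial.C ((starRingEnd ℂ) (P.coeff (k - j))) * Polynomial.X ^ j

namespace S18
variable {n : ℕ}

lemma inn_add_right (x y z : Fin n → ℂ) : inn x (y + z) = inn x y + inn x z := by
  simp [inn, mul_add, Finset.sum_add_distrib]

lemma inn_sub_right (x y z : Fin n → ℂ) : inn x (y - z) = inn x y - inn x z := by
  simp [inn, mul_sub, Finset.sum_sub_distrib]

lemma inn_smul_right (c : ℂ) (x y : Fin n → ℂ) : inn x (c • y) = c * inn x y := by
  simp only [inn, Pi.smul_apply, smul_eq_mul, Finset.mul_sum]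
  exact Finset.sum_congr rfl fun i _ => by ring

lemma inn_smul_left (c : ℂ) (x y : Fin n → ℂ) : inn (c • x) y = (starRingEnd ℂ) c * inn x y := by
  simp only [inn, Pi.smul_apply, smul_eq_mul, RingHom.map_mul, Finset.mul_sum]
  exact Finset.sum_congr rfl fun i _ => by ring

lemma inn_sum_right {α : Type*} (s : Finset α) (x : Fin n → ℂ) (f : α → Fin n → ℂ) :
    inn x (∑ j ∈ s, f j) = ∑ j ∈ s, inn x (f j) := by
  simp [inn, Finset.mul_sum]
  rw [Finset.sum_comm]

lemma inn_sum_left {α : Type*} (s : Finset α) (x : Fin n → ℂ) (f : α → Fin n → ℂ) :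
    inn (∑ j ∈ s, f j) x = ∑ j ∈ s, inn (f j) x := by
  simp [inn, Finset.sum_mul, map_sum]
  rw [Finset.sum_comm]

lemma inn_conj (x y : Fin n → ℂ) : inn x y = (starRingEnd ℂ) (inn y x) := by
  simp only [inn, map_sum, RingHom.map_mul, Complex.conj_conj]
  exact Finset.sum_congr rfl fun i _ => by ring

lemma inn_self_eq (x : Fin n → ℂ) : inn x x = ((∑ i, ‖x i‖ ^ 2 : ℝ) : ℂ) := by
  simp only [inn]
  push_cast
  refine Finset.sum_congr rfl fun i _ => ?_
  rw [mul_comm, Complex.mul_conj']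

lemma inn_self_nonneg (x : Fin n → ℂ) : 0 ≤ (inn x x).re := by
  rw [inn_self_eq]
  simp only [Complex.ofReal_re]
  exact Finset.sum_nonneg fun i _ => sq_nonneg _

lemma inn_self_im (x : Fin n → ℂ) : (inn x x).im = 0 := by
  rw [inn_self_eq]; exact Complex.ofReal_im _

lemma inn_self_eq_zero {x : Fin n → ℂ} (h : inn x x = 0) : x = 0 := by
  rw [inn_self_eq] at h
  have h2 : (∑ i, ‖x i‖ ^ 2 : ℝ) = 0 := by exact_mod_cast h
  funext i
  have := (Finset.sum_eq_zero_iff_of_nonneg (fun i _ => sq_nonneg ‖x i‖)).mp h2 i (Finset.mem_univ i)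
  have : ‖x i‖ = 0 := by nlinarith [norm_nonneg (x i)]
  simpa using this

lemma inn_unitary {A : Matrix (Fin n) (Fin n) ℂ} (hA : Aᴴ * A = 1) (x y : Fin n → ℂ) :
    inn (A.mulVec x) (A.mulVec y) = inn x y := by
  have h1 : ∀ z w : Fin n → ℂ, inn z w = star z ⬝ᵥ w := by
    intro z w; simp [inn, dotProduct, Pi.star_apply]
  rw [h1, h1, star_mulVec, ← dotProduct_mulVec, Matrix.mulVec_mulVec, hA, Matrix.one_mulVec]



noncomputable def pip {n : ℕ} (A : Matrix (Fin n) (Fin n) ℂ) (v0 : Fin n → ℂ)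
    (p r : Polynomial ℂ) : ℂ :=
  inn ((Polynomial.aeval A p).mulVec v0) ((Polynomial.aeval A r).mulVec v0)

variable {A : Matrix (Fin n) (Fin n) ℂ} {v0 : Fin n → ℂ}

lemma aeval_Cmul (a : ℂ) (p : Polynomial ℂ) :
    (Polynomial.aeval A (Polynomial.C a * p)) = a • Polynomial.aeval A p := by
  rw [_root_.map_mul, Polynomial.aeval_C, Algebra.smul_def]

lemma pip_Cmul_right (a : ℂ) (p r : Polynomial ℂ) :
    pip A v0 p (Polynomial.C a * r) = a * pip A v0 p r := by
  rw [pip, aeval_Cmul, smul_mulVec, inn_smul_right]; rfl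

lemma pip_Cmul_left (a : ℂ) (p r : Polynomial ℂ) :
    pip A v0 (Polynomial.C a * p) r = (starRingEnd ℂ) a * pip A v0 p r := by
  rw [pip, aeval_Cmul, smul_mulVec, inn_smul_left]; rfl

lemma pip_sub_right (p r s : Polynomial ℂ) :
    pip A v0 p (r - s) = pip A v0 p r - pip A v0 p s := by
  rw [pip, map_sub, Matrix.sub_mulVec, inn_sub_right]; rfl

lemma pip_sum_right {α : Type*} (s : Finset α) (p : Polynomial ℂ) (f : α → Polynomial ℂ) :
    pip A v0 p (∑ j ∈ s, f j) = ∑ j ∈ s, pip A v0 p (f j) := by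
  rw [pip, map_sum]
  classical
  rw [show (∑ j ∈ s, Polynomial.aeval A (f j)).mulVec v0
      = ∑ j ∈ s, (Polynomial.aeval A (f j)).mulVec v0 from by
    induction s using Finset.induction_on with
    | empty => simp [Matrix.zero_mulVec]
    | insert _ _ h ih => rw [Finset.sum_insert h, Finset.sum_insert h, Matrix.add_mulVec, ih]]
  exact inn_sum_right _ _ _

lemma pip_sum_left {α : Type*} (s : Finset α) (p : Polynomial ℂ) (f : α → Polynomial ℂ) :
    pip A v0 (∑ j ∈ s, f j) p = ∑ j ∈ s, pip A v0 (f j) p := by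
  rw [pip, map_sum]
  classical
  rw [show (∑ j ∈ s, Polynomial.aeval A (f j)).mulVec v0
      = ∑ j ∈ s, (Polynomial.aeval A (f j)).mulVec v0 from by
    induction s using Finset.induction_on with
    | empty => simp [Matrix.zero_mulVec]
    | insert _ _ h ih => rw [Finset.sum_insert h, Finset.sum_insert h, Matrix.add_mulVec, ih]]
  exact inn_sum_left _ _ _

lemma pip_conj (p r : Polynomial ℂ) : pip A v0 p r = (starRingEnd ℂ) (pip A v0 r p) :=
  inn_conj _ _

lemma pip_shift (hA : Aᴴ * A = 1) (p r : Polynomial ℂ) :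
    pip A v0 (Polynomial.X * p) (Polynomial.X * r) = pip A v0 p r := by
  rw [pip, _root_.map_mul, _root_.map_mul, Polynomial.aeval_X, ← Matrix.mulVec_mulVec,
    ← Matrix.mulVec_mulVec, inn_unitary hA]; rfl

lemma pip_shift_pow (hA : Aᴴ * A = 1) (j m : ℕ) (p : Polynomial ℂ) :
    pip A v0 (Polynomial.X ^ (j + m)) (Polynomial.X ^ m * p) = pip A v0 (Polynomial.X ^ j) p := by
  induction m with
  | zero => simp
  | succ m ih =>
    have e1 : (Polynomial.X : Polynomial ℂ) ^ (j + (m+1)) =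
        Polynomial.X * Polynomial.X ^ (j + m) := by
      rw [show j + (m+1) = (j+m)+1 from rfl, pow_succ, mul_comm]
    have e2 : (Polynomial.X : Polynomial ℂ) ^ (m+1) * p =
        Polynomial.X * (Polynomial.X ^ m * p) := by rw [pow_succ]; ring
    rw [e1, e2, pip_shift hA, ih]

lemma sum_mulVec {α : Type*} (s : Finset α) (M : α → Matrix (Fin n) (Fin n) ℂ)
    (x : Fin n → ℂ) : (∑ j ∈ s, M j).mulVec x = ∑ j ∈ s, (M j).mulVec x := by
  classical
  induction s using Finset.induction_on with
  | empty => simp [Matrix.zero_mulVec]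
  | insert _ _ h ih => rw [Finset.sum_insert h, Finset.sum_insert h, Matrix.add_mulVec, ih]

lemma inn_add_left (x y z : Fin n → ℂ) : inn (x + y) z = inn x z + inn y z := by
  simp [inn, add_mul, Finset.sum_add_distrib]

lemma inn_zero_left (x : Fin n → ℂ) : inn 0 x = 0 := by simp [inn]

lemma pip_pow_shift (hA : Aᴴ * A = 1) (j m l : ℕ) :
    pip A v0 (Polynomial.X ^ (j + l)) (Polynomial.X ^ (m + l)) =
      pip A v0 (Polynomial.X ^ j) (Polynomial.X ^ m) := by
  induction l with
  | zero => rfl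
  | succ l ih =>
    have e : ∀ a : ℕ, (Polynomial.X : Polynomial ℂ) ^ (a + (l+1)) =
        Polynomial.X * Polynomial.X ^ (a + l) := by
      intro a; rw [← pow_succ']; ring_nf
    rw [show j + (l+1) = (j+l) + 1 from by ring, show m + (l+1) = (m+l) + 1 from by ring,
      pow_succ, pow_succ, mul_comm _ Polynomial.X, mul_comm _ Polynomial.X, pip_shift hA, ih]

lemma inn_sub_left (x y z : Fin n → ℂ) : inn (x - y) z = inn x z - inn y z := by
  simp [inn, sub_mul, Finset.sum_sub_distrib]

lemma inn_self_re_eq (x : Fin n → ℂ) : (inn x x).re = ∑ i, ‖x i‖ ^ 2 := by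
  rw [inn_self_eq]; exact Complex.ofReal_re _

lemma inn_self_re_pos {x : Fin n → ℂ} (hx : x ≠ 0) : 0 < (inn x x).re := by
  rcases lt_or_eq_of_le (inn_self_nonneg x) with h | h
  · exact h
  · exfalso
    apply hx
    apply inn_self_eq_zero
    have him := inn_self_im x
    apply Complex.ext
    · exact h.symm
    · simpa using him

lemma nrm_pos {x : Fin n → ℂ} (hx : x ≠ 0) : 0 < nrm x :=
  Real.sqrt_pos.mpr (inn_self_re_pos hx)

lemma inn_self_eq_nrm (x : Fin n → ℂ) : inn x x = ((nrm x * nrm x : ℝ) : ℂ) := by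
  rw [inn_self_eq, nrm]
  congr 1
  rw [inn_self_re_eq, Real.mul_self_sqrt (Finset.sum_nonneg fun i _ => sq_nonneg _)]

end S18

open S18 in
set_option maxHeartbeats 2000000 in
/-- If `A` is unitary then, with `q_k^*` the reversed polynomial of
`q_k` (of formal degree `k`), one has `σ_k(0) q_k^*(z) = Σ_{j=0}^k conj(q_j(0)) q_j(z)` for
all `z`, and hence the normalized GMRES residual at `δ = 0` satisfies
`w_k(0) = q_k^*(A) v₁`. -/
theorem stmt18 (n N : ℕ) (hN : 1 ≤ N) (hNn : N ≤ n)
    (A : Matrix (Fin n) (Fin n) ℂ) (b : Fin n → ℂ) (hb : b ≠ 0)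
    (v : ℕ → Fin n → ℂ)
    (horth : ∀ i j : ℕ, i < N → j < N → inn (v i) (v j) = if i = j then 1 else 0)
    (hv1 : v 0 = (((nrm b)⁻¹ : ℝ) : ℂ) • b)
    (H : Matrix (Fin N) (Fin N) ℂ)
    (hHess : ∀ i j : Fin N, (j : ℕ) + 1 < (i : ℕ) → H i j = 0)
    (hsub : ∀ (k : ℕ) (hk : k + 1 < N),
      0 < (H ⟨k + 1, hk⟩ ⟨k, Nat.lt_of_succ_lt hk⟩).re ∧
        (H ⟨k + 1, hk⟩ ⟨k, Nat.lt_of_succ_lt hk⟩).im = 0)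
    (harn : ∀ (k : ℕ) (hk : k + 1 < N),
      A.mulVec (v k) = ∑ j : Fin (k + 2),
        H ⟨(j : ℕ), Nat.lt_of_le_of_lt (Nat.lt_succ_iff.mp j.isLt) hk⟩
          ⟨k, Nat.lt_of_succ_lt hk⟩ • v (j : ℕ))
    (harnN : A.mulVec (v (N - 1)) =
      ∑ j : Fin N, H j ⟨N - 1, Nat.sub_lt hN Nat.one_pos⟩ • v (j : ℕ))
    (q : ℕ → Polynomial ℂ) (hq0 : q 0 = 1)
    (hqrec : ∀ (k : ℕ) (hk : k + 1 < N),
      Polynomial.C (H ⟨k + 1, hk⟩ ⟨k, Nat.lt_of_succ_lt hk⟩) * q (k + 1) =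
        Polynomial.X * q k -
          ∑ j : Fin (k + 1),
            Polynomial.C (H ⟨(j : ℕ), Nat.lt_trans j.isLt hk⟩ ⟨k, Nat.lt_of_succ_lt hk⟩) *
              q (j : ℕ))
    (u : ℂ → ℕ → Fin n → ℂ)
    (humem : ∀ (δ : ℂ) (k : ℕ), k < N →
      u δ k ∈ Submodule.span ℂ {x : Fin n → ℂ | ∃ j < k, x = (A - δ • 1).mulVec (v j)})
    (huperp : ∀ (δ : ℂ) (k : ℕ), k < N →
      ∀ y ∈ Submodule.span ℂ {x : Fin n → ℂ | ∃ j < k, x = (A - δ • 1).mulVec (v j)},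
        inn y (b - u δ k) = 0)
    (r : ℂ → ℕ → Fin n → ℂ) (hr : ∀ δ k, r δ k = b - u δ k)
    (hrne : ∀ (δ : ℂ) (k : ℕ), k < N → r δ k ≠ 0)
    (w : ℂ → ℕ → Fin n → ℂ) (hw : ∀ δ k, w δ k = (((nrm (r δ k))⁻¹ : ℝ) : ℂ) • r δ k)
    (hA : Aᴴ * A = 1) :
    ∀ (k : ℕ), k < N →
      (∀ zz : ℂ, ((sigmaP q 0 k : ℝ) : ℂ) * (revPoly (q k) k).eval zz =
        ∑ j ∈ Finset.range (k + 1),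
          (starRingEnd ℂ) ((q j).eval 0) * (q j).eval zz) ∧
      w 0 k = (Polynomial.aeval A (revPoly (q k) k)).mulVec (v 0) := by
  classical
  intro k hk
  have hreal : ∀ z : ℂ, z.im = 0 → z = ((z.re : ℝ) : ℂ) := by
    intro z h; apply Complex.ext <;> simp [h]
  have hHpos : ∀ (m : ℕ) (hm : m + 1 < N), ∃ t : ℝ, 0 < t ∧
      H ⟨m+1, hm⟩ ⟨m, Nat.lt_of_succ_lt hm⟩ = (t : ℂ) := by
    intro m hm
    obtain ⟨h1, h2⟩ := hsub m hm
    exact ⟨_, h1, hreal _ h2⟩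
  -- Step 1: v j = q_j(A) v_0
  have hvq : ∀ j, j < N → (Polynomial.aeval A (q j)).mulVec (v 0) = v j := by
    intro j
    induction j using Nat.strong_induction_on with
    | _ j ih =>
      cases j with
      | zero => intro _; rw [hq0]; simp [Matrix.one_mulVec]
      | succ m =>
        intro hm1
        obtain ⟨t, ht0, hHt⟩ := hHpos m hm1
        have e : (Polynomial.aeval A (Polynomial.C (H ⟨m+1, hm1⟩ ⟨m, Nat.lt_of_succ_lt hm1⟩) *
            q (m+1))).mulVec (v 0)
            = (Polynomial.aeval A (Polynomial.X * q m -
                ∑ i : Fin (m + 1), Polynomial.C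
                  (H ⟨(i:ℕ), Nat.lt_trans i.isLt hm1⟩ ⟨m, Nat.lt_of_succ_lt hm1⟩) *
                  q (i:ℕ))).mulVec (v 0) := by rw [hqrec m hm1]
        rw [aeval_Cmul, smul_mulVec, map_sub, Matrix.sub_mulVec, _root_.map_mul,
          Polynomial.aeval_X, ← Matrix.mulVec_mulVec, map_sum, sum_mulVec] at e
        simp only [aeval_Cmul, smul_mulVec] at e
        rw [ih m (Nat.lt_succ_self m) (Nat.lt_of_succ_lt hm1)] at e
        rw [show (∑ i : Fin (m+1),
            H ⟨(i:ℕ), Nat.lt_trans i.isLt hm1⟩ ⟨m, Nat.lt_of_succ_lt hm1⟩ •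
              (Polynomial.aeval A (q (i:ℕ))).mulVec (v 0)) = ∑ i : Fin (m+1),
            H ⟨(i:ℕ), Nat.lt_trans i.isLt hm1⟩ ⟨m, Nat.lt_of_succ_lt hm1⟩ • v (i:ℕ) from
          Finset.sum_congr rfl fun i _ => by
            rw [ih (i:ℕ) i.isLt (Nat.lt_trans i.isLt hm1)]] at e
        have hne : H ⟨m+1, hm1⟩ ⟨m, Nat.lt_of_succ_lt hm1⟩ ≠ 0 := by
          rw [hHt]; exact_mod_cast ne_of_gt ht0
        refine smul_right_injective (Fin n → ℂ) hne ?_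
        show H ⟨m+1, hm1⟩ ⟨m, Nat.lt_of_succ_lt hm1⟩ • ((Polynomial.aeval A (q (m+1))).mulVec (v 0))
            = H ⟨m+1, hm1⟩ ⟨m, Nat.lt_of_succ_lt hm1⟩ • v (m+1)
        rw [e, harn m hm1, Fin.sum_univ_castSucc]
        exact add_sub_cancel_left _ _
  -- Step 2: degrees and leading coefficients
  have hdeg : ∀ j, j < N → (q j).natDegree ≤ j ∧ ∃ t : ℝ, 0 < t ∧ (q j).coeff j = (t : ℂ) := by
    intro j
    induction j using Nat.strong_induction_on with
    | _ j ih =>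
      cases j with
      | zero =>
        intro _; rw [hq0]
        exact ⟨by simp, 1, one_pos, by simp⟩
      | succ m =>
        intro hm1
        obtain ⟨th, hth0, hHt⟩ := hHpos m hm1
        have hrec := hqrec m hm1
        have hCne : H ⟨m+1, hm1⟩ ⟨m, Nat.lt_of_succ_lt hm1⟩ ≠ 0 := by
          rw [hHt]; exact_mod_cast ne_of_gt hth0
        constructor
        · have h1 : (Polynomial.C (H ⟨m+1, hm1⟩ ⟨m, Nat.lt_of_succ_lt hm1⟩) *
              q (m+1)).natDegree ≤ m + 1 := by
            rw [hrec]
            refine le_trans (Polynomial.natDegree_sub_le _ _) (max_le ?_ ?_)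
            · refine le_trans (Polynomial.natDegree_mul_le) ?_
              have := (ih m (Nat.lt_succ_self m) (Nat.lt_of_succ_lt hm1)).1
              simp only [Polynomial.natDegree_X]
              omega
            · refine Polynomial.natDegree_sum_le_of_forall_le _ _ fun i _ => ?_
              refine le_trans (Polynomial.natDegree_C_mul_le _ _) ?_
              have := (ih (i:ℕ) i.isLt (Nat.lt_trans i.isLt hm1)).1
              omega
          rwa [Polynomial.natDegree_C_mul hCne] at h1
        · obtain ⟨tm, htm0, htm⟩ := (ih m (Nat.lt_succ_self m) (Nat.lt_of_succ_lt hm1)).2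
          have hc := congrArg (fun p => Polynomial.coeff p (m+1)) hrec
          simp only [Polynomial.coeff_C_mul, Polynomial.coeff_sub, Polynomial.coeff_X_mul,
            Polynomial.finset_sum_coeff] at hc
          have hz : ∀ i : Fin (m+1),
              H ⟨(i:ℕ), Nat.lt_trans i.isLt hm1⟩ ⟨m, Nat.lt_of_succ_lt hm1⟩ *
                (q (i:ℕ)).coeff (m+1) = 0 := by
            intro i
            rw [Polynomial.coeff_eq_zero_of_natDegree_lt, mul_zero]
            have := (ih (i:ℕ) i.isLt (Nat.lt_trans i.isLt hm1)).1
            omega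
          rw [Finset.sum_eq_zero fun i _ => hz i] at hc
          rw [htm, hHt, sub_zero] at hc
          refine ⟨tm / th, div_pos htm0 hth0, ?_⟩
          have : ((th : ℂ)) ≠ 0 := by exact_mod_cast ne_of_gt hth0
          field_simp at hc ⊢
          rw [mul_comm] at hc
          rw [Complex.ofReal_div, eq_div_iff this]; exact hc
  -- Step 3: orthonormality
  have hpq : ∀ i j : ℕ, i < N → j < N →
      pip A (v 0) (q i) (q j) = if i = j then 1 else 0 := by
    intro i j hi hj
    rw [pip, hvq i hi, hvq j hj]; exact horth i j hi hj
  -- Step 4: span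
  have hspan : ∀ m, m < N → ∀ p : Polynomial ℂ, p.natDegree ≤ m →
      ∃ c : ℕ → ℂ, p = ∑ j ∈ Finset.range (m+1), Polynomial.C (c j) * q j := by
    intro m
    induction m with
    | zero =>
      intro _ p hp
      refine ⟨fun _ => p.coeff 0, ?_⟩
      rw [Finset.sum_range_one, hq0, mul_one]
      exact Polynomial.eq_C_of_natDegree_le_zero hp
    | succ m ihm =>
      intro hm1 p hp
      obtain ⟨tq, htq0, htq⟩ := (hdeg (m+1) hm1).2
      have htqne : ((tq : ℝ) : ℂ) ≠ 0 := by exact_mod_cast ne_of_gt htq0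
      set a := p.coeff (m+1) / ((tq : ℝ) : ℂ) with ha
      have hqd : (q (m+1)).natDegree ≤ m+1 := (hdeg (m+1) hm1).1
      have hp' : (p - Polynomial.C a * q (m+1)).natDegree ≤ m := by
        rw [Polynomial.natDegree_le_iff_coeff_eq_zero]
        intro i hi
        rw [Polynomial.coeff_sub, Polynomial.coeff_C_mul]
        rcases Nat.lt_or_ge (m+1) i with hlt | hge
        · rw [Polynomial.coeff_eq_zero_of_natDegree_lt (lt_of_le_of_lt hp hlt),
            Polynomial.coeff_eq_zero_of_natDegree_lt (lt_of_le_of_lt hqd hlt), mul_zero,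
            sub_zero]
        · have hieq : i = m+1 := le_antisymm hge hi
          subst hieq
          rw [htq, ha]
          field_simp
          ring
      obtain ⟨c, hc⟩ := ihm (Nat.lt_of_succ_lt hm1) _ hp'
      refine ⟨fun j => if j = m+1 then a else c j, ?_⟩
      rw [Finset.sum_range_succ]
      rw [show (∑ j ∈ Finset.range (m+1),
          Polynomial.C (if j = m+1 then a else c j) * q j)
          = ∑ j ∈ Finset.range (m+1), Polynomial.C (c j) * q j from
        Finset.sum_congr rfl fun j hj => by
          rw [if_neg (by have := Finset.mem_range.mp hj; omega)]]
      rw [← hc]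
      simp
  -- Step 5: coefficient extraction
  have hexp : ∀ m, m < N → ∀ (c : ℕ → ℂ) (i : ℕ), i ≤ m →
      pip A (v 0) (q i) (∑ j ∈ Finset.range (m+1), Polynomial.C (c j) * q j) = c i := by
    intro m hm c i him
    rw [pip_sum_right]
    rw [Finset.sum_congr rfl fun j hj => by
      rw [pip_Cmul_right, hpq i j (lt_of_le_of_lt him hm)
        (lt_of_lt_of_le (Finset.mem_range.mp hj) hm)]]
    simp [Finset.sum_ite_eq' (Finset.range (m+1)) i, Nat.lt_succ_iff, him]
  obtain ⟨hdegk, t, ht, htk⟩ :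
      (q k).natDegree ≤ k ∧ ∃ t : ℝ, 0 < t ∧ (q k).coeff k = (t : ℂ) := hdeg k hk
  -- Step 6: pip (X^(k-m)) (q k)
  have hXqk : ∀ m, m ≤ k →
      pip A (v 0) (Polynomial.X ^ (k - m)) (q k) = if m = 0 then ((t : ℂ))⁻¹ else 0 := by
    intro m hm
    have hdm : (Polynomial.X ^ (k-m) : Polynomial ℂ).natDegree ≤ k - m := by
      simp [Polynomial.natDegree_X_pow]
    obtain ⟨c, hc⟩ := hspan (k-m) (lt_of_le_of_lt (Nat.sub_le k m) hk) _ hdm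
    rw [hc, pip_sum_left]
    rw [Finset.sum_congr rfl fun j hj => by
      rw [pip_Cmul_left,
        hpq j k (lt_of_le_of_lt (le_trans (Nat.lt_succ_iff.mp (Finset.mem_range.mp hj))
          (Nat.sub_le k m)) hk) hk, mul_ite, mul_one, mul_zero]]
    rw [Finset.sum_ite_eq' (Finset.range (k-m+1)) k (fun j => (starRingEnd ℂ) (c j))]
    by_cases hm0 : m = 0
    · subst hm0
      simp only [Nat.sub_zero] at hc ⊢
      rw [if_pos (Finset.self_mem_range_succ k)]
      simp only [eq_self_iff_true, if_true]
      have hco := congrArg (fun p => Polynomial.coeff p k) hc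
      simp only [Polynomial.finset_sum_coeff, Polynomial.coeff_C_mul,
        Polynomial.coeff_X_pow, if_pos rfl] at hco
      rw [Finset.sum_eq_single k (fun j hj hne => by
          rw [Polynomial.coeff_eq_zero_of_natDegree_lt
            (lt_of_le_of_lt (hdeg j (lt_of_le_of_lt (Nat.lt_succ_iff.mp (Finset.mem_range.mp hj)) hk)).1
              (lt_of_le_of_ne (Nat.lt_succ_iff.mp (Finset.mem_range.mp hj)) hne)), mul_zero])
        (fun hnm => absurd (Finset.self_mem_range_succ k) hnm)] at hco
      rw [htk] at hco
      have hck : c k = ((t : ℂ))⁻¹ := by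
        simp only [if_true] at hco
        have htne : ((t : ℝ) : ℂ) ≠ 0 := by exact_mod_cast ne_of_gt ht
        field_simp
        linear_combination -hco
      rw [hck, map_inv₀, Complex.conj_ofReal]
    · rw [if_neg hm0, if_neg (by intro hmem; have := Finset.mem_range.mp hmem; omega)]
  -- Step 7: pip revPoly (q i)
  have hmono : ∀ j, j < N → q j = ∑ m ∈ Finset.range (j+1),
      Polynomial.C ((q j).coeff m) * Polynomial.X ^ m := by
    intro j hj
    conv_lhs => rw [Polynomial.as_sum_range' (q j) (j+1) (Nat.lt_succ_of_le (hdeg j hj).1)]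
    exact Finset.sum_congr rfl fun m _ => (Polynomial.C_mul_X_pow_eq_monomial).symm
  have hrev : ∀ i, i ≤ k →
      pip A (v 0) (revPoly (q k) k) (q i) = (q i).eval 0 * ((t : ℂ))⁻¹ := by
    intro i hik
    have hiN : i < N := lt_of_le_of_lt hik hk
    have key : ∀ m, m ≤ i → pip A (v 0) (Polynomial.X ^ k) (Polynomial.X ^ m * q k)
        = if m = 0 then ((t : ℂ))⁻¹ else 0 := by
      intro m hmi
      have hsub' : k - m + m = k := Nat.sub_add_cancel (le_trans hmi hik)
      have hps := pip_shift_pow (A := A) (v0 := v 0) hA (k-m) m (q k)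
      rw [hsub'] at hps
      rw [hps, hXqk m (le_trans hmi hik)]
    rw [revPoly, pip_sum_left]
    have step1 : ∀ j ∈ Finset.range (k+1),
        pip A (v 0) (Polynomial.C ((starRingEnd ℂ) ((q k).coeff (k - j))) * Polynomial.X ^ j)
          (q i)
        = (q k).coeff (k - j) * ∑ m ∈ Finset.range (i+1),
            ((q i).coeff m) * pip A (v 0) (Polynomial.X ^ j) (Polynomial.X ^ m) := by
      intro j hj
      rw [pip_Cmul_left, Complex.conj_conj]
      congr 1
      conv_lhs => rw [show q i = ∑ m ∈ Finset.range (i+1),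
        Polynomial.C ((q i).coeff m) * Polynomial.X ^ m from hmono i hiN]
      rw [pip_sum_right]
      exact Finset.sum_congr rfl fun m _ => by rw [pip_Cmul_right]
    rw [Finset.sum_congr rfl step1]
    have step2 : ∀ j ∈ Finset.range (k+1),
        (q k).coeff (k - j) * ∑ m ∈ Finset.range (i+1),
            ((q i).coeff m) * pip A (v 0) (Polynomial.X ^ j) (Polynomial.X ^ m)
        = (q k).coeff (k - j) * ∑ m ∈ Finset.range (i+1),
            ((q i).coeff m) * pip A (v 0) (Polynomial.X ^ k) (Polynomial.X ^ (m + (k - j))) := by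
      intro j hj
      have hjk : j ≤ k := Nat.lt_succ_iff.mp (Finset.mem_range.mp hj)
      congr 1
      refine Finset.sum_congr rfl fun m _ => ?_
      congr 1
      have hps := pip_shift_pow (A := A) (v0 := v 0) hA j (k-j) (Polynomial.X ^ m)
      have h1 : j + (k - j) = k := Nat.add_sub_cancel' hjk
      have h2 : (Polynomial.X : Polynomial ℂ) ^ (k - j) * Polynomial.X ^ m
          = Polynomial.X ^ (m + (k - j)) := by rw [← pow_add]; ring_nf
      rw [h1, h2] at hps
      exact hps.symm
    rw [Finset.sum_congr rfl step2]
    have hrefl := Finset.sum_range_reflect (fun l => (q k).coeff l *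
      ∑ m ∈ Finset.range (i+1),
        ((q i).coeff m) * pip A (v 0) (Polynomial.X ^ k) (Polynomial.X ^ (m + l))) (k+1)
    simp only [Nat.add_sub_cancel] at hrefl
    rw [hrefl]
    rw [show (∑ l ∈ Finset.range (k+1), (q k).coeff l * ∑ m ∈ Finset.range (i+1),
        ((q i).coeff m) * pip A (v 0) (Polynomial.X ^ k) (Polynomial.X ^ (m + l)))
        = ∑ m ∈ Finset.range (i+1), (q i).coeff m * ∑ l ∈ Finset.range (k+1),
            (q k).coeff l * pip A (v 0) (Polynomial.X ^ k) (Polynomial.X ^ (m + l)) from by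
      simp only [Finset.mul_sum]
      rw [Finset.sum_comm]
      exact Finset.sum_congr rfl fun m _ => Finset.sum_congr rfl fun l _ => by ring]
    have step3 : ∀ m ∈ Finset.range (i+1),
        (q i).coeff m * (∑ l ∈ Finset.range (k+1),
          (q k).coeff l * pip A (v 0) (Polynomial.X ^ k) (Polynomial.X ^ (m + l)))
        = (q i).coeff m * pip A (v 0) (Polynomial.X ^ k) (Polynomial.X ^ m * q k) := by
      intro m _
      congr 1
      conv_rhs => rw [show q k = ∑ l ∈ Finset.range (k+1),
        Polynomial.C ((q k).coeff l) * Polynomial.X ^ l from hmono k hk]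
      rw [Finset.mul_sum, pip_sum_right]
      refine Finset.sum_congr rfl fun l _ => ?_
      rw [show Polynomial.X ^ m * (Polynomial.C ((q k).coeff l) * Polynomial.X ^ l)
          = Polynomial.C ((q k).coeff l) * Polynomial.X ^ (m + l) from by
        rw [pow_add]; ring, pip_Cmul_right]
    rw [Finset.sum_congr rfl step3]
    rw [Finset.sum_congr rfl fun m hm => by
      rw [key m (Nat.lt_succ_iff.mp (Finset.mem_range.mp hm)), mul_ite, mul_zero]]
    rw [Finset.sum_ite_eq' (Finset.range (i+1)) 0 (fun m => (q i).coeff m * ((t : ℂ))⁻¹)]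
    rw [if_pos (Finset.mem_range.mpr (Nat.succ_pos i)), Polynomial.coeff_zero_eq_eval_zero]
  -- Step 8: key polynomial identity
  have htne : ((t : ℝ) : ℂ) ≠ 0 := by exact_mod_cast ne_of_gt ht
  have hkey : Polynomial.C ((t : ℝ) : ℂ) * revPoly (q k) k =
      ∑ j ∈ Finset.range (k+1), Polynomial.C ((starRingEnd ℂ) ((q j).eval 0)) * q j := by
    have hdrev : (revPoly (q k) k).natDegree ≤ k := by
      rw [revPoly]
      refine Polynomial.natDegree_sum_le_of_forall_le _ _ fun j hj => ?_
      refine le_trans (Polynomial.natDegree_C_mul_le _ _) ?_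
      rw [Polynomial.natDegree_X_pow]
      exact Nat.lt_succ_iff.mp (Finset.mem_range.mp hj)
    have hdphi : (∑ j ∈ Finset.range (k+1),
        Polynomial.C ((starRingEnd ℂ) ((q j).eval 0)) * q j).natDegree ≤ k := by
      refine Polynomial.natDegree_sum_le_of_forall_le _ _ fun j hj => ?_
      refine le_trans (Polynomial.natDegree_C_mul_le _ _) ?_
      exact le_trans (hdeg j (lt_of_le_of_lt (Nat.lt_succ_iff.mp (Finset.mem_range.mp hj)) hk)).1
        (Nat.lt_succ_iff.mp (Finset.mem_range.mp hj))
    have hdD : ((∑ j ∈ Finset.range (k+1),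
        Polynomial.C ((starRingEnd ℂ) ((q j).eval 0)) * q j) -
        Polynomial.C ((t : ℝ) : ℂ) * revPoly (q k) k).natDegree ≤ k :=
      le_trans (Polynomial.natDegree_sub_le _ _)
        (max_le hdphi (le_trans (Polynomial.natDegree_C_mul_le _ _) hdrev))
    obtain ⟨c, hc⟩ := hspan k hk _ hdD
    have hc0 : ∀ i, i ≤ k → c i = 0 := by
      intro i hik
      have h1 : pip A (v 0) (q i) ((∑ j ∈ Finset.range (k+1),
          Polynomial.C ((starRingEnd ℂ) ((q j).eval 0)) * q j) -
          Polynomial.C ((t : ℝ) : ℂ) * revPoly (q k) k) = c i := by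
        rw [hc]; exact hexp k hk c i hik
      rw [pip_sub_right, pip_Cmul_right,
        hexp k hk (fun j => (starRingEnd ℂ) ((q j).eval 0)) i hik] at h1
      have h2 : pip A (v 0) (q i) (revPoly (q k) k)
          = (starRingEnd ℂ) ((q i).eval 0) * ((t : ℂ))⁻¹ := by
        rw [pip_conj, hrev i hik, RingHom.map_mul, map_inv₀, Complex.conj_ofReal]
      rw [h2] at h1
      rw [← h1]
      field_simp
      ring
    have hD0 : (∑ j ∈ Finset.range (k+1),
        Polynomial.C ((starRingEnd ℂ) ((q j).eval 0)) * q j) -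
        Polynomial.C ((t : ℝ) : ℂ) * revPoly (q k) k = 0 := by
      rw [hc]
      refine Finset.sum_eq_zero fun j hj => ?_
      rw [hc0 j (Nat.lt_succ_iff.mp (Finset.mem_range.mp hj)), map_zero, zero_mul]
    exact (sub_eq_zero.mp hD0).symm
  -- Step 9: sigma = t
  have hrev0 : (revPoly (q k) k).eval 0 = ((t : ℝ) : ℂ) := by
    rw [revPoly, Polynomial.eval_finset_sum]
    rw [Finset.sum_eq_single 0 (fun j hj hjne => by
        rw [Polynomial.eval_mul, Polynomial.eval_pow, Polynomial.eval_X,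
          zero_pow hjne, mul_zero])
      (fun hmem => absurd (Finset.mem_range.mpr (Nat.succ_pos k)) hmem)]
    rw [Polynomial.eval_mul, Polynomial.eval_C, Polynomial.eval_pow, Polynomial.eval_X,
      pow_zero, mul_one, Nat.sub_zero, htk, Complex.conj_ofReal]
  have hsigma : sigmaP q 0 k = t := by
    have he := congrArg (Polynomial.eval 0) hkey
    rw [Polynomial.eval_mul, Polynomial.eval_C, hrev0, Polynomial.eval_finset_sum] at he
    have hconv : ∀ j ∈ Finset.range (k+1),
        (Polynomial.C ((starRingEnd ℂ) ((q j).eval 0)) * q j).eval 0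
        = ((‖(q j).eval 0‖ ^ 2 : ℝ) : ℂ) := fun j _ => by
      rw [Polynomial.eval_mul, Polynomial.eval_C, mul_comm, Complex.mul_conj,
        ← Complex.sq_norm]
    rw [Finset.sum_congr rfl hconv, ← Complex.ofReal_sum] at he
    have he2 : t * t = ∑ j ∈ Finset.range (k+1), ‖(q j).eval 0‖ ^ 2 := by
      exact_mod_cast he
    rw [sigmaP, ← he2]
    exact Real.sqrt_mul_self (le_of_lt ht)
  constructor
  · intro zz
    have := congrArg (Polynomial.eval zz) hkey
    rw [Polynomial.eval_mul, Polynomial.eval_C] at this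
    rw [hsigma, this, Polynomial.eval_finset_sum]
    exact Finset.sum_congr rfl fun j _ => by rw [Polynomial.eval_mul, Polynomial.eval_C]
  · -- Goal B
    have hA0 : (A - (0:ℂ) • (1 : Matrix (Fin n) (Fin n) ℂ)) = A := by simp
    -- abbreviations
    have habs : t * t = ∑ j ∈ Finset.range (k+1), ‖(q j).eval 0‖ ^ 2 := by
      have hs2 := hsigma
      rw [sigmaP] at hs2
      have hnn : 0 ≤ ∑ j ∈ Finset.range (k + 1), ‖(q j).eval 0‖ ^ 2 :=
        Finset.sum_nonneg fun j _ => sq_nonneg _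
      rw [← hs2, Real.mul_self_sqrt hnn]
    have hperp : ∀ j, j < k → inn (A.mulVec (v j)) (r 0 k) = 0 := by
      intro j hj
      rw [hr]
      refine huperp 0 k hk _ (Submodule.subset_span ⟨j, hj, ?_⟩)
      rw [hA0]
    have hcoef : ∀ j, j ≤ k →
        inn (v j) (r 0 k) = inn (v 0) (r 0 k) * (starRingEnd ℂ) ((q j).eval 0) := by
      intro j
      induction j using Nat.strong_induction_on with
      | _ j ih =>
        cases j with
        | zero => intro _; rw [hq0]; simp
        | succ m =>
          intro hmk
          have hm1N : m + 1 < N := lt_of_le_of_lt hmk hk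
          have h0 := hperp m (lt_of_lt_of_le (Nat.lt_succ_self m) hmk)
          rw [harn m hm1N, inn_sum_left,
            Finset.sum_congr rfl (fun i _ => inn_smul_left _ _ _),
            Fin.sum_univ_castSucc] at h0
          simp only [Fin.coe_castSucc, Fin.val_last] at h0
          rw [Finset.sum_congr rfl (fun (i : Fin (m+1)) _ => by
            rw [ih (i : ℕ) i.isLt
              (le_trans (le_trans (Nat.lt_succ_iff.mp i.isLt) (Nat.le_succ m)) hmk)])] at h0
          have h0' : (∑ i : Fin (m+1),
              (starRingEnd ℂ) (H ⟨(i:ℕ), Nat.lt_trans i.isLt hm1N⟩ ⟨m, Nat.lt_of_succ_lt hm1N⟩) *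
                (inn (v 0) (r 0 k) * (starRingEnd ℂ) ((q (i:ℕ)).eval 0)))
              + (starRingEnd ℂ) (H ⟨m+1, hm1N⟩ ⟨m, Nat.lt_of_succ_lt hm1N⟩) *
                inn (v (m+1)) (r 0 k) = 0 := h0
          clear h0
          rename' h0' => h0
          -- evaluate recurrence at 0
          have hq0e := congrArg (Polynomial.eval 0) (hqrec m hm1N)
          rw [Polynomial.eval_mul, Polynomial.eval_C, Polynomial.eval_sub,
            Polynomial.eval_mul, Polynomial.eval_X, zero_mul,
            Polynomial.eval_finset_sum] at hq0e
          rw [Finset.sum_congr rfl (fun (i : Fin (m+1)) _ => by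
            rw [Polynomial.eval_mul, Polynomial.eval_C])] at hq0e
          -- cancel
          obtain ⟨th, hth0, hHt⟩ := hHpos m hm1N
          have hcne : (starRingEnd ℂ) (H ⟨m+1, hm1N⟩ ⟨m, Nat.lt_of_succ_lt hm1N⟩) ≠ 0 := by
            rw [hHt, Complex.conj_ofReal]
            exact_mod_cast ne_of_gt hth0
          apply mul_left_cancel₀ hcne
          have hsum : (∑ i : Fin (m+1),
              (starRingEnd ℂ) (H ⟨(i:ℕ), Nat.lt_trans i.isLt hm1N⟩ ⟨m, Nat.lt_of_succ_lt hm1N⟩) *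
                (inn (v 0) (r 0 k) * (starRingEnd ℂ) ((q (i:ℕ)).eval 0)))
              = inn (v 0) (r 0 k) * (starRingEnd ℂ)
                (∑ i : Fin (m+1),
                  H ⟨(i:ℕ), Nat.lt_trans i.isLt hm1N⟩ ⟨m, Nat.lt_of_succ_lt hm1N⟩ *
                    ((q (i:ℕ)).eval 0)) := by
            rw [map_sum, Finset.mul_sum]
            exact Finset.sum_congr rfl fun i _ => by
              rw [RingHom.map_mul]; ring
          rw [hsum] at h0
          have h1 : (starRingEnd ℂ) (H ⟨m+1, hm1N⟩ ⟨m, Nat.lt_of_succ_lt hm1N⟩) *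
              inn (v (m+1)) (r 0 k)
              = - (inn (v 0) (r 0 k) * (starRingEnd ℂ)
                (∑ i : Fin (m+1),
                  H ⟨(i:ℕ), Nat.lt_trans i.isLt hm1N⟩ ⟨m, Nat.lt_of_succ_lt hm1N⟩ *
                    ((q (i:ℕ)).eval 0))) := by linear_combination h0
          rw [h1]
          have h2 : (∑ i : Fin (m+1),
              H ⟨(i:ℕ), Nat.lt_trans i.isLt hm1N⟩ ⟨m, Nat.lt_of_succ_lt hm1N⟩ *
                ((q (i:ℕ)).eval 0))
              = - (H ⟨m+1, hm1N⟩ ⟨m, Nat.lt_of_succ_lt hm1N⟩ * ((q (m+1)).eval 0)) := by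
            linear_combination hq0e
          rw [h2, map_neg, RingHom.map_mul]
          ring
    -- the span V of v_0 .. v_k
    set V := Submodule.span ℂ {x : Fin n → ℂ | ∃ j, j ≤ k ∧ x = v j} with hV
    have hbpos : 0 < nrm b := nrm_pos hb
    have hbv : b = ((nrm b : ℝ) : ℂ) • v 0 := by
      rw [hv1, smul_smul]
      have hne : ((nrm b : ℝ) : ℂ) ≠ 0 := by exact_mod_cast ne_of_gt hbpos
      rw [show ((nrm b : ℝ) : ℂ) * (((nrm b)⁻¹ : ℝ) : ℂ) = 1 by
        push_cast
        field_simp]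
      rw [one_smul]
    have hbV : b ∈ V := by
      rw [hbv]
      exact Submodule.smul_mem _ _ (Submodule.subset_span ⟨0, Nat.zero_le k, rfl⟩)
    have hgen : {x : Fin n → ℂ | ∃ j < k, x = (A - (0:ℂ) • 1).mulVec (v j)} ⊆ (V : Set _) := by
      rintro x ⟨j, hj, rfl⟩
      rw [hA0]
      have hjN : j + 1 < N := lt_of_le_of_lt hj hk
      rw [harn j hjN]
      refine Submodule.sum_mem _ fun i _ => Submodule.smul_mem _ _ ?_
      refine Submodule.subset_span ⟨(i : ℕ), ?_, rfl⟩
      have := i.isLt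
      omega
    have huV : u 0 k ∈ V := Submodule.span_le.mpr hgen (humem 0 k hk)
    have hRV : r 0 k ∈ V := by
      rw [hr]
      exact Submodule.sub_mem _ hbV huV
    -- orthogonal decomposition of r
    have hReq : r 0 k = ∑ j ∈ Finset.range (k+1), (inn (v j) (r 0 k)) • v j := by
      set x := r 0 k - ∑ j ∈ Finset.range (k+1), (inn (v j) (r 0 k)) • v j with hx
      have hxV : x ∈ V := by
        refine Submodule.sub_mem _ hRV (Submodule.sum_mem _ fun j hj =>
          Submodule.smul_mem _ _ (Submodule.subset_span
            ⟨j, Nat.lt_succ_iff.mp (Finset.mem_range.mp hj), rfl⟩))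
      have hvx : ∀ i, i ≤ k → inn (v i) x = 0 := by
        intro i hik
        rw [hx, inn_sub_right, inn_sum_right,
          Finset.sum_congr rfl (fun j hj => by
            rw [inn_smul_right, horth i j (lt_of_le_of_lt hik hk)
              (lt_of_le_of_lt (Nat.lt_succ_iff.mp (Finset.mem_range.mp hj)) hk),
              mul_ite, mul_one, mul_zero]),
          Finset.sum_ite_eq (Finset.range (k+1)) i (fun j => inn (v j) (r 0 k)),
          if_pos (Finset.mem_range.mpr (Nat.lt_succ_of_le hik)), sub_self]
      have hyx : ∀ y ∈ V, inn y x = 0 := by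
        intro y hy
        refine Submodule.span_induction ?_ ?_ ?_ ?_ hy
        · rintro z ⟨j, hj, rfl⟩
          exact hvx j hj
        · exact inn_zero_left x
        · intro a c _ _ ha hc
          rw [inn_add_left, ha, hc, add_zero]
        · intro a z _ hz
          rw [inn_smul_left, hz, mul_zero]
      have hx0 : x = 0 := inn_self_eq_zero (hyx x hxV)
      have := sub_eq_zero.mp hx0
      exact this
    -- positive real c0
    have hinnuR : inn (u 0 k) (r 0 k) = 0 := by
      rw [hr]
      exact huperp 0 k hk _ (humem 0 k hk)
    have hinnbR : inn b (r 0 k) = ((nrm b : ℝ) : ℂ) * inn (v 0) (r 0 k) := by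
      conv_lhs => rw [hbv]
      rw [inn_smul_left, Complex.conj_ofReal]
    have hRR : inn (r 0 k) (r 0 k) = ((nrm b : ℝ) : ℂ) * inn (v 0) (r 0 k) := by
      have e1 : inn (r 0 k) (r 0 k) = inn (b - u 0 k) (r 0 k) :=
        congrArg (fun z => inn z (r 0 k)) (hr 0 k)
      rw [e1, inn_sub_left, hinnuR, sub_zero, hinnbR]
    have hRne : r 0 k ≠ 0 := hrne 0 k hk
    have hnRpos : 0 < nrm (r 0 k) := nrm_pos hRne
    obtain ⟨tc, htc0, hc0v⟩ : ∃ tc : ℝ, 0 < tc ∧ inn (v 0) (r 0 k) = ((tc : ℝ) : ℂ) := by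
      refine ⟨nrm (r 0 k) * nrm (r 0 k) / nrm b, by positivity, ?_⟩
      have h2 := hRR
      rw [inn_self_eq_nrm] at h2
      rw [show ((nrm (r 0 k) * nrm (r 0 k) / nrm b : ℝ) : ℂ)
          = ((nrm (r 0 k) * nrm (r 0 k) : ℝ) : ℂ) / ((nrm b : ℝ) : ℂ) from by push_cast; ring]
      rw [eq_div_iff (by exact_mod_cast ne_of_gt hbpos : ((nrm b : ℝ) : ℂ) ≠ 0)]
      linear_combination -h2
    have hRs : r 0 k = ((tc : ℝ) : ℂ) • ∑ j ∈ Finset.range (k+1),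
        (starRingEnd ℂ) ((q j).eval 0) • v j := by
      rw [hReq, Finset.smul_sum]
      refine Finset.sum_congr rfl fun j hj => ?_
      rw [hcoef j (Nat.lt_succ_iff.mp (Finset.mem_range.mp hj)), hc0v, smul_smul]
    have hss : inn (∑ j ∈ Finset.range (k+1), (starRingEnd ℂ) ((q j).eval 0) • v j)
        (∑ j ∈ Finset.range (k+1), (starRingEnd ℂ) ((q j).eval 0) • v j)
        = ((t * t : ℝ) : ℂ) := by
      rw [inn_sum_left]
      rw [Finset.sum_congr rfl (fun j hj => by
        rw [inn_smul_left, inn_sum_right, Finset.sum_congr rfl (fun i hi => by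
          rw [inn_smul_right,
            horth j i (lt_of_le_of_lt (Nat.lt_succ_iff.mp (Finset.mem_range.mp hj)) hk)
              (lt_of_le_of_lt (Nat.lt_succ_iff.mp (Finset.mem_range.mp hi)) hk),
            mul_ite, mul_one, mul_zero]),
          Finset.sum_ite_eq (Finset.range (k+1)) j
            (fun i => (starRingEnd ℂ) ((q i).eval 0)), if_pos hj, Complex.conj_conj,
          Complex.mul_conj, ← Complex.sq_norm])]
      rw [← Complex.ofReal_sum, ← habs]
    have hRRval : inn (r 0 k) (r 0 k) = (((tc * t) * (tc * t) : ℝ) : ℂ) := by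
      rw [hRs, inn_smul_left, inn_smul_right, hss, Complex.conj_ofReal]
      push_cast
      ring
    have hnR : nrm (r 0 k) = tc * t := by
      rw [nrm, hRRval]
      rw [show ((((tc * t) * (tc * t) : ℝ) : ℂ)).re = (tc * t) * (tc * t) from
        Complex.ofReal_re _]
      exact Real.sqrt_mul_self (by positivity)
    have hX : ((t : ℝ) : ℂ) • ((Polynomial.aeval A (revPoly (q k) k)).mulVec (v 0))
        = ∑ j ∈ Finset.range (k+1), (starRingEnd ℂ) ((q j).eval 0) • v j := by
      have hc := congrArg (fun p => (Polynomial.aeval A p).mulVec (v 0)) hkey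
      rw [aeval_Cmul, smul_mulVec, map_sum, sum_mulVec] at hc
      rw [hc]
      refine Finset.sum_congr rfl fun j hj => ?_
      rw [aeval_Cmul, smul_mulVec,
        hvq j (lt_of_le_of_lt (Nat.lt_succ_iff.mp (Finset.mem_range.mp hj)) hk)]
    rw [hw, hnR, hRs, ← hX, smul_smul, smul_smul]
    have hcoe : ((((tc * t)⁻¹ : ℝ)) : ℂ) * ((tc : ℝ) : ℂ) * ((t : ℝ) : ℂ) = 1 := by
      have h1 : ((tc : ℝ) : ℂ) ≠ 0 := by exact_mod_cast ne_of_gt htc0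
      push_cast
      field_simp
    rw [hcoe, one_smul]
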